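/- The sliding block code π intertwines the Thue-Morse substitution H (0→01, 1→10) with the Feigenbaum substitution H_feig (0→11, 1→10): H_feig ∘ π = π ∘ H. In particular π maps both Thue-Morse fixed points ρ₀, ρ₁ to the kneading sequence ρ, the fixed point of H_feig starting with 1. -/
import Mathlib


open Filter Topology MeasureTheory

/-- The left shift on the full 2-shift `Σ = {0,1}^ℕ`. -/
def shift (x : ℕ → Bool) : ℕ → Bool := fun n => x (n + 1)

/-- The Thue–Morse substitution `H : 0 → 01, 1 → 10`, acting on sequences. -/
def subH (x : ℕ → Bool) : ℕ → Bool :=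
  fun n => if n % 2 = 0 then x (n / 2) else !x (n / 2)

/-- The Thue–Morse sequence: `tm n` is the parity of the number of 1s in
the binary expansion of `n`. -/
def tm (n : ℕ) : Bool := (Nat.digits 2 n).count 1 % 2 == 1

/-- The fixed point of `subH` starting with 0. -/
def rho0 : ℕ → Bool := tm

/-- The fixed point of `subH` starting with 1. -/
def rho1 : ℕ → Bool := fun n => !tm n

/-- `rhoB b` is the fixed point of `subH` starting with digit `b`. -/
def rhoB : Bool → ℕ → Bool
  | false => rho0
  | true => rho1

/-- The digit-flipping involution. -/
def flipSeq (x : ℕ → Bool) : ℕ → Bool := fun n => !x n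

/-- Prepend a digit to a sequence. -/
def consTM (a : Bool) (x : ℕ → Bool) : ℕ → Bool
  | 0 => a
  | n + 1 => x n

/-- The Thue–Morse subshift: the closure of the shift orbit of `rho0`. -/
def TMK : Set (ℕ → Bool) := closure {y | ∃ n, y = shift^[n] rho0}

/-- The renormalization operator `𝓡V = V ∘ σ ∘ H + V ∘ H`. -/
def RenOp (V : (ℕ → Bool) → ℝ) : (ℕ → Bool) → ℝ :=
  fun x => V (shift (subH x)) + V (subH x)

/-- The Birkhoff sum `S_k V = ∑_{i<k} V ∘ σⁱ`. -/
def birkhoff (V : (ℕ → Bool) → ℝ) (k : ℕ) (x : ℕ → Bool) : ℝ :=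
  ∑ i ∈ Finset.range k, V (shift^[i] x)

/-- The potential `U_c`: value `c` on `[01]`, `-c` on `[10]`, `0` on `[00] ∪ [11]`. -/
def Upot (c : ℝ) (x : ℕ → Bool) : ℝ :=
  if x 0 = false ∧ x 1 = true then c
  else if x 0 = true ∧ x 1 = false then -c else 0

/-- The sliding block code `π(x)_k = 1` iff `x_k ≠ x_{k+1}`. -/
def piTM (x : ℕ → Bool) : ℕ → Bool := fun n => x n != x (n + 1)

/-- The Feigenbaum substitution `0 → 11, 1 → 10`, acting on sequences. -/
def subHfeig (x : ℕ → Bool) : ℕ → Bool :=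
  fun n => if n % 2 = 0 then true else !x (n / 2)

lemma tm_two_mul (m : ℕ) : tm (2 * m) = tm m := by
  rcases Nat.eq_zero_or_pos m with h | h
  · simp [h]
  · unfold tm
    rw [show 2 * m = (2 * m - 1) + 1 by omega,
      Nat.digits_add_two_add_one (b := 0), show 2 * m - 1 + 1 = 2 * m by omega]
    simp [Nat.mul_mod_right, Nat.mul_div_cancel_left, List.count_cons]

lemma tm_two_mul_add_one (m : ℕ) : tm (2 * m + 1) = !tm m := by
  unfold tm
  rw [Nat.digits_add_two_add_one (b := 0)]
  have h1 : (2 * m + 1) % 2 = 1 := by omega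
  have h2 : (2 * m + 1) / 2 = m := by omega
  rw [h1, h2]
  simp only [List.count_cons, if_pos rfl]
  rcases Nat.mod_two_eq_zero_or_one ((Nat.digits 2 m).count 1) with h | h <;>
    simp [Nat.add_mod, h]

lemma subH_tm : subH tm = tm := by
  funext n
  unfold subH
  rcases Nat.even_or_odd n with ⟨m, hm⟩ | ⟨m, hm⟩
  · subst hm
    rw [if_pos (by omega), show m + m = 2 * m by ring, tm_two_mul,
      Nat.mul_div_cancel_left _ (by norm_num)]
  · subst hm
    rw [if_neg (by omega), show (2 * m + 1) / 2 = m by omega, tm_two_mul_add_one]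

lemma intertwine : subHfeig ∘ piTM = piTM ∘ subH := by
  funext x n
  simp only [Function.comp_apply, subHfeig, piTM, subH]
  rcases Nat.even_or_odd n with ⟨m, hm⟩ | ⟨m, hm⟩
  · have h1 : n % 2 = 0 := by omega
    have h2 : (n + 1) % 2 = 1 := by omega
    have h3 : (n + 1) / 2 = m := by omega
    have h4 : n / 2 = m := by omega
    rw [if_pos h1, if_pos h1, if_neg (by omega), h3, h4]
    cases x m <;> simp
  · have h1 : n % 2 = 1 := by omega
    have h2 : (n + 1) % 2 = 0 := by omega
    have h3 : (n + 1) / 2 = m + 1 := by omega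
    have h4 : n / 2 = m := by omega
    rw [if_neg (by omega), if_neg (by omega), if_pos h2, h3, h4]
    cases x m <;> cases x (m + 1) <;> simp

lemma feig_unique (f g : ℕ → Bool) (hf : subHfeig f = f) (hg : subHfeig g = g) :
    f = g := by
  funext n
  induction n using Nat.strong_induction_on with
  | _ n ih =>
    rw [← hf, ← hg]
    unfold subHfeig
    rcases Nat.mod_two_eq_zero_or_one n with h | h
    · rw [if_pos h, if_pos h]
    · rw [if_neg (by omega), if_neg (by omega), ih (n / 2) (by omega)]

lemma piTM_flip (x : ℕ → Bool) : piTM (flipSeq x) = piTM x := by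
  funext n
  simp only [piTM, flipSeq]
  cases x n <;> cases x (n + 1) <;> rfl

/-- `π` intertwines the Thue–Morse substitution with the Feigenbaum
substitution, `H_feig ∘ π = π ∘ H`, and maps both Thue–Morse fixed points to the
kneading sequence `ρ`, the fixed point of `H_feig` starting with `1`. -/
theorem stmt19 :
    subHfeig ∘ piTM = piTM ∘ subH ∧
    ∀ rho : ℕ → Bool, rho 0 = true → subHfeig rho = rho →
      piTM rho0 = rho ∧ piTM rho1 = rho := by
  refine ⟨intertwine, fun rho _ hfix => ?_⟩
  have hfp : subHfeig (piTM rho0) = piTM rho0 := by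
    have := congrFun intertwine rho0
    simp only [Function.comp_apply] at this
    rw [this, show subH rho0 = rho0 from subH_tm]
  have h0 : piTM rho0 = rho := feig_unique _ _ hfp hfix
  have h1 : piTM rho1 = piTM rho0 := by
    have : rho1 = flipSeq rho0 := rfl
    rw [this, piTM_flip]
  exact ⟨h0, h1.trans h0⟩
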